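/- Let n ≥ 2 and let ψ_n ∈ ℂ^{2^n} ⊗ ℂ^{2^n} be the unit vector with components (ψ_n)_{(a,b)} = 2^{−n/2} if a = b and 0 otherwise, where a, b range over {0,1}^n (this is the n-fold tensor power of a Bell pair with the A-systems and B-systems grouped together). Then 1 + 2·E(|ψ_n⟩⟨ψ_n|) = 2^{n+1} − 1, and this is strictly smaller than 3^n = (1 + 2·E(|ψ_1⟩⟨ψ_1|))^n, where ψ_1 = (e_0⊗e_0 + e_1⊗e_1)/√2 is a single Bell pair. -/

import Mathlib

open Matrix Complex Kronecker
open scoped ComplexOrder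

noncomputable section

/-- A density matrix: positive semidefinite with trace 1. -/
def IsDensityMatrix {d : Type*} [Fintype d] (ρ : Matrix d d ℂ) : Prop :=
  ρ.PosSemidef ∧ ρ.trace = 1

/-- A separable state on a bipartite system: a finite convex combination of Kronecker
products of density matrices. -/
def SeparableState {dA dB : Type*} [Fintype dA] [Fintype dB]
    (ρ : Matrix (dA × dB) (dA × dB) ℂ) : Prop :=
  ∃ (n : ℕ) (p : Fin n → ℝ) (σ : Fin n → Matrix dA dA ℂ) (τ : Fin n → Matrix dB dB ℂ),
    (∀ k, 0 ≤ p k) ∧ (∑ k, p k) = 1 ∧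
    (∀ k, IsDensityMatrix (σ k)) ∧ (∀ k, IsDensityMatrix (τ k)) ∧
    ρ = ∑ k, (p k : ℂ) • ((σ k) ⊗ₖ (τ k))

/-- The robustness of entanglement. -/
def robustness {dA dB : Type*} [Fintype dA] [Fintype dB]
    (ρ : Matrix (dA × dB) (dA × dB) ℂ) : ℝ :=
  sInf { t : ℝ | 0 ≤ t ∧ ∃ σ : Matrix (dA × dB) (dA × dB) ℂ,
    SeparableState σ ∧ SeparableState (((1 + t : ℝ) : ℂ)⁻¹ • (ρ + (t : ℂ) • σ)) }

/-- γ(ρ): optimal one-norm of a quasiprobability decomposition into separable states. -/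
def gammaSep {dA dB : Type*} [Fintype dA] [Fintype dB]
    (ρ : Matrix (dA × dB) (dA × dB) ℂ) : ℝ :=
  sInf { c : ℝ | ∃ (ap am : ℝ) (ρp ρm : Matrix (dA × dB) (dA × dB) ℂ),
    0 ≤ ap ∧ 0 ≤ am ∧ SeparableState ρp ∧ SeparableState ρm ∧
    ρ = (ap : ℂ) • ρp - (am : ℂ) • ρm ∧ c = ap + am }

/-- Singular values of a complex matrix: square roots of eigenvalues of `Mᴴ * M`. -/
def singularValues {m n : Type*} [Fintype m] [Fintype n] [DecidableEq n]
    (M : Matrix m n ℂ) : n → ℝ :=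
  fun i => Real.sqrt ((Matrix.isHermitian_conjTranspose_mul_self M).eigenvalues i)

set_option linter.unusedSectionVars false
set_option maxHeartbeats 1000000
open Finset
namespace RobAux

variable {ι : Type*} [Fintype ι]

/-- outer product of a vector with itself -/
def outer (v : ι → ℂ) : Matrix ι ι ℂ := vecMulVec v (star v)

lemma outer_apply (v : ι → ℂ) (i j : ι) : outer v i j = v i * (starRingEnd ℂ) (v j) := rfl

lemma posSemidef_outer (v : ι → ℂ) : (outer v).PosSemidef := by
  rw [Matrix.posSemidef_iff_dotProduct_mulVec]
  constructor
  · ext i j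
    simp [outer_apply, conjTranspose_apply, mul_comm]
  · intro x
    have : dotProduct (star x) ((outer v) *ᵥ x) =
        (starRingEnd ℂ) (dotProduct (star v) x) * (dotProduct (star v) x) := by
      simp only [dotProduct, mulVec, outer_apply, Pi.star_apply, map_sum, _root_.map_mul]
      simp only [Finset.mul_sum, Finset.sum_mul]
      rw [Finset.sum_comm]
      refine Finset.sum_congr rfl fun i _ => Finset.sum_congr rfl fun j _ => ?_
      simp [RCLike.star_def]
      ring
    rw [this, Complex.conj_mul']
    positivity

lemma trace_outer (v : ι → ℂ) : (outer v).trace = ∑ i, v i * (starRingEnd ℂ) (v i) := by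
  simp [Matrix.trace, Matrix.diag, outer_apply]

lemma isDensityMatrix_outer (v : ι → ℂ) (hv : ∑ i, v i * (starRingEnd ℂ) (v i) = 1) :
    IsDensityMatrix (outer v) :=
  ⟨posSemidef_outer v, by rw [trace_outer, hv]⟩

lemma separable_of_sum {dA dB : Type*} [Fintype dA] [Fintype dB] {κ : Type*} [Fintype κ]
    (w : κ → ℝ) (u : κ → dA → ℂ) (v : κ → dB → ℂ)
    (hw : ∀ k, 0 ≤ w k) (hsum : ∑ k, w k = 1)
    (hu : ∀ k, ∑ i, u k i * (starRingEnd ℂ) (u k i) = 1)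
    (hv : ∀ k, ∑ i, v k i * (starRingEnd ℂ) (v k i) = 1)
    {M : Matrix (dA × dB) (dA × dB) ℂ}
    (hM : M = ∑ k, (w k : ℂ) • (outer (u k) ⊗ₖ outer (v k))) :
    SeparableState M := by
  obtain ⟨e⟩ : Nonempty (κ ≃ Fin (Fintype.card κ)) := ⟨Fintype.equivFin κ⟩
  refine ⟨Fintype.card κ, fun i => w (e.symm i), fun i => outer (u (e.symm i)),
    fun i => outer (v (e.symm i)), fun i => hw _, ?_, fun i => isDensityMatrix_outer _ (hu _),
    fun i => isDensityMatrix_outer _ (hv _), ?_⟩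
  · rw [← hsum]; exact e.symm.sum_comp w
  · rw [hM]; exact (e.symm.sum_comp _).symm



/-- A cube root of unity. -/
def ζ : ℂ := Complex.exp (2 * Real.pi * Complex.I / 3)

lemma ζ_prim : IsPrimitiveRoot ζ 3 := by
  have := Complex.isPrimitiveRoot_exp 3 (by norm_num)
  convert this using 2
  unfold ζ; norm_num

lemma ζ_pow_three : ζ ^ 3 = 1 := ζ_prim.pow_eq_one

lemma ζ_ne_one : ζ ≠ 1 := ζ_prim.ne_one (by norm_num)

lemma ζ_sum : 1 + ζ + ζ ^ 2 = 0 := by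
  have h : (ζ - 1) * (1 + ζ + ζ ^ 2) = ζ ^ 3 - 1 := by ring
  rw [ζ_pow_three, sub_self] at h
  rcases mul_eq_zero.mp h with h' | h'
  · exact absurd (sub_eq_zero.mp h') ζ_ne_one
  · exact h'

lemma ζ_mul_conj : ζ * (starRingEnd ℂ) ζ = 1 := by
  rw [Complex.mul_conj]
  have h3 : ‖ζ‖ ^ 3 = 1 := by rw [← norm_pow, ζ_pow_three, norm_one]
  have habs : ‖ζ‖ = 1 := by nlinarith [norm_nonneg ζ, sq_nonneg (‖ζ‖ - 1), sq_nonneg (‖ζ‖ + 1)]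
  rw [Complex.normSq_eq_norm_sq, habs]
  norm_num

/-- additive character of ZMod 3 -/
def χ (x : ZMod 3) : ℂ := ζ ^ x.val

lemma χ_zero : χ 0 = 1 := rfl

lemma ζ_pow_mod (a : ℕ) : ζ ^ (a % 3) = ζ ^ a := by
  conv_rhs => rw [← Nat.div_add_mod a 3]
  rw [pow_add, pow_mul, ζ_pow_three, one_pow, one_mul]

lemma χ_add (x y : ZMod 3) : χ (x + y) = χ x * χ y := by
  unfold χ
  rw [ZMod.val_add, ζ_pow_mod, pow_add]

lemma χ_conj (x : ZMod 3) : (starRingEnd ℂ) (χ x) = χ (-x) := by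
  have h1 : χ x * χ (-x) = 1 := by rw [← χ_add, add_neg_cancel, χ_zero]
  have h2 : χ x * (starRingEnd ℂ) (χ x) = 1 := by
    unfold χ
    rw [map_pow, ← mul_pow, ζ_mul_conj, one_pow]
  have hχ : χ x ≠ 0 := fun h => one_ne_zero (by rw [← h1, h, zero_mul])
  exact mul_left_cancel₀ hχ (h2.trans h1.symm)

lemma zmod3_sum_expand (f : ZMod 3 → ℂ) : ∑ x : ZMod 3, f x = f 0 + f 1 + f 2 := by
  have hs : (Finset.univ : Finset (ZMod 3)) = {0, 1, 2} := by decide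
  rw [hs, Finset.sum_insert (by decide), Finset.sum_insert (by decide), Finset.sum_singleton]
  ring

lemma χ_one : χ 1 = ζ := by unfold χ; rw [show ((1 : ZMod 3)).val = 1 from rfl, pow_one]
lemma χ_two : χ 2 = ζ ^ 2 := by unfold χ; rfl

lemma χ_sum_mul (c : ZMod 3) : ∑ x : ZMod 3, χ (c * x) = if c = 0 then 3 else 0 := by
  rw [zmod3_sum_expand]
  by_cases hc : c = 0
  · simp [hc, χ_zero]; norm_num
  · rw [if_neg hc]
    have : c = 1 ∨ c = 2 := by revert hc; revert c; decide
    rcases this with rfl | rfl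
    · rw [show ((1:ZMod 3) * 0) = 0 by decide, show ((1:ZMod 3) * 1) = 1 by decide,
        show ((1:ZMod 3) * 2) = 2 by decide, χ_zero, χ_one, χ_two]
      linear_combination ζ_sum
    · rw [show ((2:ZMod 3) * 0) = 0 by decide, show ((2:ZMod 3) * 1) = 2 by decide,
        show ((2:ZMod 3) * 2) = 1 by decide, χ_zero, χ_one, χ_two]
      linear_combination ζ_sum

lemma χ_sum_eq_prod {ι : Type*} (s : Finset ι) (f : ι → ZMod 3) :
    χ (∑ m ∈ s, f m) = ∏ m ∈ s, χ (f m) := by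
  induction s using Finset.cons_induction with
  | empty => simp [χ_zero]
  | cons a s ha ih => rw [Finset.sum_cons, Finset.prod_cons, χ_add, ih]

variable (ι : Type*) [Fintype ι] [DecidableEq ι]

def P0 : Matrix (ι × ι) (ι × ι) ℂ :=
  Matrix.of fun p q => if p.1 = p.2 ∧ q.1 = q.2 then (Fintype.card ι : ℂ)⁻¹ else 0

def D0 : Matrix (ι × ι) (ι × ι) ℂ :=
  Matrix.of fun p q => if p = q ∧ p.1 = p.2 then 1 else 0

def cc : ℂ := ((Real.sqrt (Fintype.card ι) : ℝ) : ℂ)⁻¹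

lemma cc_conj : (starRingEnd ℂ) (cc ι) = cc ι := by
  unfold cc; rw [map_inv₀, Complex.conj_ofReal]

lemma cc_mul_self (hd : 0 < Fintype.card ι) : cc ι * cc ι = (Fintype.card ι : ℂ)⁻¹ := by
  unfold cc
  rw [← mul_inv, ← Complex.ofReal_mul, Real.mul_self_sqrt (by positivity)]
  norm_num

variable {ι}

lemma sum_char (t : ι → ZMod 3) :
    ∑ ω : ι → ZMod 3, χ (∑ m, t m * ω m)
      = if (∀ m, t m = 0) then ((3:ℂ) ^ Fintype.card ι) else 0 := by
  have h1 : ∀ ω : ι → ZMod 3, χ (∑ m, t m * ω m) = ∏ m, χ (t m * ω m) := fun ω =>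
    χ_sum_eq_prod _ _
  simp_rw [h1]
  rw [← Fintype.piFinset_univ, Finset.sum_prod_piFinset univ (fun m y => χ (t m * y))]
  have h2 : ∀ m : ι, ∑ x : ZMod 3, χ (t m * x) = if t m = 0 then (3:ℂ) else 0 := fun m =>
    χ_sum_mul _
  simp_rw [h2]
  by_cases h : ∀ m, t m = 0
  · rw [if_pos h]
    have : ∀ m : ι, (if t m = 0 then (3:ℂ) else 0) = 3 := fun m => if_pos (h m)
    simp_rw [this]
    rw [Finset.prod_const, Finset.card_univ]
  · rw [if_neg h]
    push_neg at h
    obtain ⟨m, hm⟩ := h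
    exact Finset.prod_eq_zero (Finset.mem_univ m) (if_neg hm)

/-- the coefficient function for entry `((j,k),(j',k'))` -/
def tco (j k j' k' : ι) : ι → ZMod 3 := fun m =>
  (if m = j then 1 else 0) - (if m = j' then 1 else 0) - (if m = k then 1 else 0)
    + (if m = k' then 1 else 0)

lemma tco_zero_iff (j k j' k' : ι) :
    (∀ m, tco j k j' k' m = 0) ↔ ((j = j' ∧ k = k') ∨ (j = k ∧ j' = k')) := by
  constructor
  · intro h
    by_cases hjj' : j = j'
    · subst hjj'
      left
      refine ⟨rfl, ?_⟩
      have hk := h k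
      unfold tco at hk
      by_cases hkk' : k = k'
      · exact hkk'
      exfalso
      rw [if_neg hkk', if_pos rfl] at hk
      by_cases hkj : k = j
      · rw [if_pos hkj] at hk; revert hk; decide
      · rw [if_neg hkj] at hk; revert hk; decide
    · right
      have hj := h j
      unfold tco at hj
      rw [if_pos rfl, if_neg hjj'] at hj
      by_cases hjk : j = k
      case neg =>
        exfalso
        rw [if_neg hjk] at hj
        by_cases hjk' : j = k'
        · rw [if_pos hjk'] at hj; revert hj; decide
        · rw [if_neg hjk'] at hj; revert hj; decide
      case pos =>
        refine ⟨hjk, ?_⟩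
        have hj' := h j'
        unfold tco at hj'
        rw [if_neg (Ne.symm hjj'), if_pos rfl] at hj'
        have hj'k : ¬ (j' = k) := fun hc => hjj' (hjk.trans hc.symm)
        rw [if_neg hj'k] at hj'
        by_cases hj'k' : j' = k'
        · exact hj'k'
        · exfalso; rw [if_neg hj'k'] at hj'; revert hj'; decide
  · rintro (⟨h1, h2⟩ | ⟨h1, h2⟩) <;> subst h1 <;> subst h2 <;> intro m <;> unfold tco <;> ring

variable (ι)

def uvec (ω : ι → ZMod 3) : ι → ℂ := fun j => cc ι * χ (ω j)
def vvec (ω : ι → ZMod 3) : ι → ℂ := fun j => cc ι * χ (- ω j)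

variable {ι}

lemma χ_mul_χ_neg (x : ZMod 3) : χ x * χ (-x) = 1 := by
  rw [← χ_add, add_neg_cancel, χ_zero]

lemma uvec_unit (hd : 0 < Fintype.card ι) (ω : ι → ZMod 3) :
    ∑ i, uvec ι ω i * (starRingEnd ℂ) (uvec ι ω i) = 1 := by
  have hterm : ∀ i, uvec ι ω i * (starRingEnd ℂ) (uvec ι ω i) = (Fintype.card ι : ℂ)⁻¹ := by
    intro i
    unfold uvec
    rw [_root_.map_mul, cc_conj, χ_conj]
    calc cc ι * χ (ω i) * (cc ι * χ (-ω i)) = cc ι * cc ι * (χ (ω i) * χ (-ω i)) := by ring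
    _ = (Fintype.card ι : ℂ)⁻¹ := by rw [cc_mul_self ι hd, χ_mul_χ_neg, mul_one]
  rw [Finset.sum_congr rfl (fun i _ => hterm i), Finset.sum_const, Finset.card_univ,
    nsmul_eq_mul]
  have : (Fintype.card ι : ℂ) ≠ 0 := Nat.cast_ne_zero.mpr hd.ne'
  field_simp

lemma vvec_unit (hd : 0 < Fintype.card ι) (ω : ι → ZMod 3) :
    ∑ i, vvec ι ω i * (starRingEnd ℂ) (vvec ι ω i) = 1 := by
  have hterm : ∀ i, vvec ι ω i * (starRingEnd ℂ) (vvec ι ω i) = (Fintype.card ι : ℂ)⁻¹ := by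
    intro i
    unfold vvec
    rw [_root_.map_mul, cc_conj, χ_conj, neg_neg]
    calc cc ι * χ (-ω i) * (cc ι * χ (ω i)) = cc ι * cc ι * (χ (ω i) * χ (-ω i)) := by ring
    _ = (Fintype.card ι : ℂ)⁻¹ := by rw [cc_mul_self ι hd, χ_mul_χ_neg, mul_one]
  rw [Finset.sum_congr rfl (fun i _ => hterm i), Finset.sum_const, Finset.card_univ,
    nsmul_eq_mul]
  have : (Fintype.card ι : ℂ) ≠ 0 := Nat.cast_ne_zero.mpr hd.ne'
  field_simp

lemma tco_sum (j k j' k' : ι) (ω : ι → ZMod 3) :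
    ∑ m, tco j k j' k' m * ω m = ω j - ω j' - ω k + ω k' := by
  unfold tco
  simp only [sub_mul, add_mul, ite_mul, one_mul, zero_mul]
  rw [Finset.sum_add_distrib, Finset.sum_sub_distrib, Finset.sum_sub_distrib]
  simp [Finset.sum_ite_eq' Finset.univ]

lemma E1 (hd : 0 < Fintype.card ι) :
    ∑ ω : ι → ZMod 3, outer (uvec ι ω) ⊗ₖ outer (vvec ι ω)
      = (((3:ℂ) ^ Fintype.card ι) * (Fintype.card ι : ℂ)⁻¹ * (Fintype.card ι : ℂ)⁻¹) •
          (1 + (Fintype.card ι : ℂ) • P0 ι - D0 ι) := by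
  have hcne : (Fintype.card ι : ℂ) ≠ 0 := Nat.cast_ne_zero.mpr hd.ne'
  ext ⟨j, k⟩ ⟨j', k'⟩
  have hterm : ∀ ω : ι → ZMod 3,
      (outer (uvec ι ω) ⊗ₖ outer (vvec ι ω)) (j, k) (j', k')
        = ((Fintype.card ι : ℂ)⁻¹ * (Fintype.card ι : ℂ)⁻¹) * χ (∑ m, tco j k j' k' m * ω m) := by
    intro ω
    rw [kroneckerMap_apply, outer_apply, outer_apply]
    unfold uvec vvec
    rw [_root_.map_mul, _root_.map_mul, cc_conj, χ_conj, χ_conj, neg_neg, tco_sum]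
    have : ω j - ω j' - ω k + ω k' = ω j + (- ω j') + (- ω k) + ω k' := by ring
    rw [this, χ_add, χ_add, χ_add, ← cc_mul_self ι hd]
    ring
  rw [Matrix.sum_apply]
  rw [Finset.sum_congr rfl (fun ω _ => hterm ω), ← Finset.mul_sum, sum_char]
  simp only [tco_zero_iff]
  simp only [Matrix.smul_apply, Matrix.sub_apply, Matrix.add_apply, Matrix.one_apply,
    Matrix.smul_apply, P0, D0, Matrix.of_apply, smul_eq_mul, Prod.mk.injEq, Prod.ext_iff]
  by_cases h1 : j = j' <;> by_cases h2 : k = k' <;> by_cases h3 : j = k <;>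
    by_cases h4 : j' = k' <;> simp_all <;> field_simp <;> ring

variable (ι)

def bvec (a : ι) : ι → ℂ := fun m => if m = a then 1 else 0

def ψme : ι × ι → ℂ := fun p => if p.1 = p.2 then cc ι else 0

variable {ι}

lemma bvec_unit (a : ι) : ∑ i, bvec ι a i * (starRingEnd ℂ) (bvec ι a i) = 1 := by
  unfold bvec
  simp [apply_ite (starRingEnd ℂ), Finset.sum_ite_eq']

lemma offdiag_id :
    ∑ a : ι, ∑ b : ι, (if a = b then (0:ℂ) else 1) • (outer (bvec ι a) ⊗ₖ outer (bvec ι b))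
      = 1 - D0 ι := by
  ext ⟨j, k⟩ ⟨j', k'⟩
  simp only [Matrix.sum_apply, Matrix.smul_apply, kroneckerMap_apply, outer_apply,
    smul_eq_mul, Matrix.sub_apply, Matrix.one_apply, D0, Matrix.of_apply, bvec,
    apply_ite (starRingEnd ℂ), _root_.map_one, map_zero]
  have hterm : ∀ a b : ι,
      (if a = b then (0:ℂ) else 1) *
        ((if j = a then (1:ℂ) else 0) * (if j' = a then (1:ℂ) else 0) *
          ((if k = b then (1:ℂ) else 0) * (if k' = b then (1:ℂ) else 0)))
      = if j = a then (if k = b then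
          (if j' = a ∧ k' = b ∧ ¬ a = b then (1:ℂ) else 0) else 0) else 0 := by
    intro a b
    by_cases hab : a = b <;> by_cases h1 : j = a <;> by_cases h2 : j' = a <;>
      by_cases h3 : k = b <;> by_cases h4 : k' = b <;> simp_all
  rw [Finset.sum_congr rfl (fun a _ => Finset.sum_congr rfl (fun b _ => hterm a b))]
  have hcol : ∀ a : ι, ∑ b : ι, (if k = b then
      (if j' = a ∧ k' = b ∧ ¬ a = b then (1:ℂ) else 0) else 0)
      = if j' = a ∧ k' = k ∧ ¬ a = k then (1:ℂ) else 0 := by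
    intro a
    rw [Finset.sum_ite_eq]
    simp
  have hstep : ∀ a : ι, (∑ b : ι, if j = a then (if k = b then
      (if j' = a ∧ k' = b ∧ ¬ a = b then (1:ℂ) else 0) else 0) else 0)
      = if j = a then (if j' = a ∧ k' = k ∧ ¬ a = k then (1:ℂ) else 0) else 0 := by
    intro a
    by_cases h : j = a
    · simp only [if_pos h, hcol a]
    · simp [if_neg h]
  rw [Finset.sum_congr rfl (fun a _ => hstep a), Finset.sum_ite_eq]
  simp only [Finset.mem_univ, if_true]
  by_cases h1 : j = j' <;> by_cases h2 : k = k' <;> by_cases h3 : j = k <;>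
    simp_all [Prod.ext_iff] <;> try tauto

lemma Pme_eq (hd : 0 < Fintype.card ι) :
    vecMulVec (ψme ι) (star (ψme ι)) = P0 ι := by
  ext ⟨j, k⟩ ⟨j', k'⟩
  simp only [vecMulVec_apply, Pi.star_apply, ψme, P0, Matrix.of_apply, RCLike.star_def,
    apply_ite (starRingEnd ℂ), map_zero, cc_conj]
  by_cases h1 : j = k <;> by_cases h2 : j' = k' <;>
    simp_all [cc_mul_self ι hd]


/-- quadratic form of an outer product -/
lemma outer_quad (v x : ι → ℂ) :
    dotProduct (star x) ((outer v) *ᵥ x)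
      = (starRingEnd ℂ) (dotProduct (star v) x) * (dotProduct (star v) x) := by
  simp only [dotProduct, mulVec, outer_apply, Pi.star_apply, map_sum, _root_.map_mul]
  simp only [Finset.mul_sum, Finset.sum_mul]
  rw [Finset.sum_comm]
  refine Finset.sum_congr rfl fun i _ => Finset.sum_congr rfl fun j _ => ?_
  simp [RCLike.star_def]
  ring

/-- the overlap of two density matrices, as in `∑ a b, σ a b * τ a b`, is a real number
in `[0,1]`. -/
lemma density_overlap (σ τ : Matrix ι ι ℂ) (hσ : IsDensityMatrix σ) (hτ : IsDensityMatrix τ) :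
    ∃ s : ℝ, 0 ≤ s ∧ s ≤ 1 ∧ ∑ a, ∑ b, σ a b * τ a b = (s : ℂ) := by
  classical
  have fac : ∀ M : Matrix ι ι ℂ, M.PosSemidef → ∃ B : Matrix ι ι ℂ, M = Bᴴ * B := by
    intro M hM
    open scoped MatrixOrder Matrix.Norms.L2Operator in
    obtain ⟨B, hB⟩ := CStarAlgebra.nonneg_iff_eq_star_mul_self.mp hM.nonneg
    exact ⟨B, hB⟩
  obtain ⟨B, hB⟩ := fac σ hσ.1
  obtain ⟨C, hC⟩ := fac τ hτ.1
  set g : ι → ι → ℂ := fun i l => ∑ b, B i b * C l b with hg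
  have key : ∑ a, ∑ b, σ a b * τ a b = ∑ i, ∑ l, (starRingEnd ℂ) (g i l) * g i l := by
    subst hB hC
    have lhs : ∀ a b : ι, (Bᴴ*B) a b * (Cᴴ*C) a b = ∑ i, ∑ l,
        ((starRingEnd ℂ) (B i a) * (starRingEnd ℂ) (C l a)) * (B i b * C l b) := by
      intro a b
      rw [Matrix.mul_apply, Matrix.mul_apply, Finset.sum_mul_sum]
      exact Finset.sum_congr rfl fun i _ => Finset.sum_congr rfl fun l _ => by
        simp only [Matrix.conjTranspose_apply, RCLike.star_def]; ring
    have rhs : ∀ i l : ι, (starRingEnd ℂ) (g i l) * g i l = ∑ a, ∑ b,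
        ((starRingEnd ℂ) (B i a) * (starRingEnd ℂ) (C l a)) * (B i b * C l b) := by
      intro i l
      rw [hg]
      simp only [map_sum, _root_.map_mul]
      rw [Finset.sum_mul_sum]
    simp_rw [lhs, rhs]
    calc ∑ a : ι, ∑ b : ι, ∑ i : ι, ∑ l : ι,
          ((starRingEnd ℂ) (B i a) * (starRingEnd ℂ) (C l a)) * (B i b * C l b)
        = ∑ a : ι, ∑ i : ι, ∑ b : ι, ∑ l : ι, _ := by
          exact Finset.sum_congr rfl fun a _ => Finset.sum_comm
      _ = ∑ i : ι, ∑ a : ι, ∑ b : ι, ∑ l : ι, _ := Finset.sum_comm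
      _ = ∑ i : ι, ∑ a : ι, ∑ l : ι, ∑ b : ι, _ := by
          exact Finset.sum_congr rfl fun i _ => Finset.sum_congr rfl fun a _ => Finset.sum_comm
      _ = ∑ i : ι, ∑ l : ι, ∑ a : ι, ∑ b : ι,
          ((starRingEnd ℂ) (B i a) * (starRingEnd ℂ) (C l a)) * (B i b * C l b) := by
          exact Finset.sum_congr rfl fun i _ => Finset.sum_comm
  have hBtr : ∑ i, ∑ b, Complex.normSq (B i b) = 1 := by
    have h1 : (Bᴴ * B).trace = 1 := hB ▸ hσ.2
    have h2 : (Bᴴ * B).trace = ((∑ i, ∑ b, Complex.normSq (B i b) : ℝ) : ℂ) := by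
      simp only [Matrix.trace, Matrix.diag, Matrix.mul_apply, Matrix.conjTranspose_apply]
      rw [Finset.sum_comm]
      push_cast
      refine Finset.sum_congr rfl fun i _ => Finset.sum_congr rfl fun b _ => ?_
      rw [Complex.normSq_eq_conj_mul_self]; rfl
    rw [h2] at h1
    exact_mod_cast h1
  have hCtr : ∑ l, ∑ b, Complex.normSq (C l b) = 1 := by
    have h1 : (Cᴴ * C).trace = 1 := hC ▸ hτ.2
    have h2 : (Cᴴ * C).trace = ((∑ l, ∑ b, Complex.normSq (C l b) : ℝ) : ℂ) := by
      simp only [Matrix.trace, Matrix.diag, Matrix.mul_apply, Matrix.conjTranspose_apply]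
      rw [Finset.sum_comm]
      push_cast
      refine Finset.sum_congr rfl fun i _ => Finset.sum_congr rfl fun b _ => ?_
      rw [Complex.normSq_eq_conj_mul_self]; rfl
    rw [h2] at h1
    exact_mod_cast h1
  refine ⟨∑ i, ∑ l, Complex.normSq (g i l),
    Finset.sum_nonneg fun i _ => Finset.sum_nonneg fun l _ => Complex.normSq_nonneg _, ?_, by
    rw [key]; push_cast
    refine Finset.sum_congr rfl fun i _ => Finset.sum_congr rfl fun l _ => ?_
    rw [Complex.normSq_eq_conj_mul_self]⟩
  -- the bound
  calc ∑ i, ∑ l, Complex.normSq (g i l)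
      ≤ ∑ i, ∑ l, (∑ b, Complex.normSq (B i b)) * (∑ b, Complex.normSq (C l b)) := by
        refine Finset.sum_le_sum fun i _ => Finset.sum_le_sum fun l _ => ?_
        have h1 : ‖g i l‖ ≤ ∑ b, ‖B i b‖ * ‖C l b‖ := by
          rw [hg]
          have h := norm_sum_le (Finset.univ) (fun b => B i b * C l b)
          simp only [norm_mul] at h
          exact h
        have h2 : (∑ b, ‖B i b‖ * ‖C l b‖) ^ 2
            ≤ (∑ b, ‖B i b‖ ^ 2) * (∑ b, ‖C l b‖ ^ 2) :=
          Finset.sum_mul_sq_le_sq_mul_sq _ _ _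
        have h3 : Complex.normSq (g i l) = ‖g i l‖ ^ 2 := (Complex.sq_norm _).symm
        rw [h3]
        calc ‖g i l‖ ^ 2
            ≤ (∑ b, ‖B i b‖ * ‖C l b‖) ^ 2 := by
              have := norm_nonneg (g i l)
              nlinarith [Finset.sum_nonneg (fun b (_ : b ∈ Finset.univ) =>
                mul_nonneg (norm_nonneg (B i b)) (norm_nonneg (C l b)))]
          _ ≤ (∑ b, ‖B i b‖ ^ 2) * (∑ b, ‖C l b‖ ^ 2) := h2
          _ = (∑ b, Complex.normSq (B i b)) * (∑ b, Complex.normSq (C l b)) := by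
              congr 1 <;> exact Finset.sum_congr rfl fun b _ => Complex.sq_norm _
    _ = (∑ i, ∑ b, Complex.normSq (B i b)) * (∑ l, ∑ b, Complex.normSq (C l b)) := by
        rw [← Finset.sum_mul_sum]
    _ = 1 := by rw [hBtr, hCtr, mul_one]


variable (ι)

/-- The fidelity functional with the maximally entangled state. -/
def Qf (M : Matrix (ι × ι) (ι × ι) ℂ) : ℂ :=
  dotProduct (star (ψme ι)) (M *ᵥ ψme ι)

variable {ι}

lemma Qf_eq (hd : 0 < Fintype.card ι) (M : Matrix (ι × ι) (ι × ι) ℂ) :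
    Qf ι M = (Fintype.card ι : ℂ)⁻¹ * ∑ a, ∑ b, M (a, a) (b, b) := by
  unfold Qf
  have hq : ∀ p : ι × ι, (∑ q : ι × ι, M p q * ψme ι q) = (∑ b, M p (b, b)) * cc ι := by
    intro p
    rw [Fintype.sum_prod_type, Finset.sum_mul]
    refine Finset.sum_congr rfl fun b1 _ => ?_
    simp only [ψme, mul_ite, mul_zero]
    rw [Finset.sum_ite_eq]
    simp
  calc dotProduct (star (ψme ι)) (M *ᵥ ψme ι)
      = ∑ p : ι × ι, (starRingEnd ℂ) (ψme ι p) * ∑ q : ι × ι, M p q * ψme ι q := by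
        simp only [dotProduct, mulVec, Pi.star_apply, RCLike.star_def]
    _ = ∑ p : ι × ι, (starRingEnd ℂ) (ψme ι p) * ((∑ b, M p (b, b)) * cc ι) := by
        exact Finset.sum_congr rfl fun p _ => by rw [hq p]
    _ = ∑ a, (cc ι * ((∑ b, M (a, a) (b, b)) * cc ι)) := by
        rw [Fintype.sum_prod_type]
        refine Finset.sum_congr rfl fun a _ => ?_
        simp only [ψme, apply_ite (starRingEnd ℂ), map_zero, cc_conj, ite_mul, zero_mul]
        rw [Finset.sum_ite_eq]
        simp
    _ = (Fintype.card ι : ℂ)⁻¹ * ∑ a, ∑ b, M (a, a) (b, b) := by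
        rw [Finset.mul_sum]
        refine Finset.sum_congr rfl fun a _ => ?_
        rw [← cc_mul_self ι hd]
        ring

lemma Q_sep (hd : 0 < Fintype.card ι) {σ : Matrix (ι × ι) (ι × ι) ℂ}
    (h : SeparableState σ) :
    ∃ r : ℝ, 0 ≤ r ∧ r ≤ (Fintype.card ι : ℝ)⁻¹ ∧ Qf ι σ = (r : ℝ) := by
  obtain ⟨N, p, σs, τs, hp, hps, hσd, hτd, rfl⟩ := h
  choose s hs0 hs1 hseq using fun k => density_overlap (σs k) (τs k) (hσd k) (hτd k)
  have hkey : Qf ι (∑ k, (p k : ℂ) • (σs k ⊗ₖ τs k))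
      = (Fintype.card ι : ℂ)⁻¹ * ∑ k, (p k : ℂ) * (s k : ℂ) := by
    rw [Qf_eq hd]
    congr 1
    have step : ∀ (a b : ι), (∑ k, (p k : ℂ) • (σs k ⊗ₖ τs k)) (a, a) (b, b)
        = ∑ k, (p k : ℂ) * (σs k a b * τs k a b) := by
      intro a b
      simp [Matrix.sum_apply, kroneckerMap_apply]
    simp_rw [step]
    calc ∑ a : ι, ∑ b : ι, ∑ k, (p k : ℂ) * (σs k a b * τs k a b)
        = ∑ a : ι, ∑ k, ∑ b : ι, (p k : ℂ) * (σs k a b * τs k a b) := by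
          exact Finset.sum_congr rfl fun a _ => Finset.sum_comm
      _ = ∑ k, ∑ a : ι, ∑ b : ι, (p k : ℂ) * (σs k a b * τs k a b) := Finset.sum_comm
      _ = ∑ k, (p k : ℂ) * (s k : ℂ) := by
          refine Finset.sum_congr rfl fun k _ => ?_
          rw [← hseq k]
          rw [Finset.mul_sum]
          exact Finset.sum_congr rfl fun a _ => by rw [Finset.mul_sum]
  refine ⟨(Fintype.card ι : ℝ)⁻¹ * ∑ k, p k * s k, ?_, ?_, ?_⟩
  · have : 0 ≤ ∑ k, p k * s k :=
      Finset.sum_nonneg fun k _ => mul_nonneg (hp k) (hs0 k)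
    positivity
  · have h1 : ∑ k, p k * s k ≤ ∑ k, p k :=
      Finset.sum_le_sum fun k _ => by nlinarith [hp k, hs0 k, hs1 k]
    rw [hps] at h1
    have h2 : (0:ℝ) ≤ (Fintype.card ι : ℝ)⁻¹ := by positivity
    nlinarith
  · rw [hkey]
    push_cast
    ring

lemma Qf_Pme (hd : 0 < Fintype.card ι) :
    Qf ι (vecMulVec (ψme ι) (star (ψme ι))) = 1 := by
  rw [Pme_eq hd, Qf_eq hd]
  have hcne : (Fintype.card ι : ℂ) ≠ 0 := Nat.cast_ne_zero.mpr hd.ne'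
  simp only [P0, Matrix.of_apply, if_pos (And.intro rfl rfl)]
  rw [Finset.sum_const, Finset.sum_const, Finset.card_univ, nsmul_eq_mul, nsmul_eq_mul]
  field_simp
  simp [hcne]

lemma Qf_smul (c : ℂ) (M : Matrix (ι × ι) (ι × ι) ℂ) : Qf ι (c • M) = c * Qf ι M := by
  unfold Qf
  rw [Matrix.smul_mulVec, dotProduct_smul]
  simp

lemma Qf_add (M N : Matrix (ι × ι) (ι × ι) ℂ) : Qf ι (M + N) = Qf ι M + Qf ι N := by
  unfold Qf
  rw [Matrix.add_mulVec, dotProduct_add]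


/-- The robustness feasible set for the maximally entangled state. -/
def RS : Set ℝ :=
  { t : ℝ | 0 ≤ t ∧ ∃ σ : Matrix (ι × ι) (ι × ι) ℂ,
    SeparableState σ ∧ SeparableState (((1 + t : ℝ) : ℂ)⁻¹ •
      (vecMulVec (ψme ι) (star (ψme ι)) + (t : ℂ) • σ)) }

lemma mem_lb (hd2 : 2 ≤ Fintype.card ι) {t : ℝ} (ht : t ∈ (RS (ι := ι))) :
    (Fintype.card ι : ℝ) - 1 ≤ t := by
  obtain ⟨ht0, σ, hσ, hmix⟩ := ht
  have hd : 0 < Fintype.card ι := by omega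
  have hcR : (2:ℝ) ≤ (Fintype.card ι : ℝ) := by exact_mod_cast hd2
  obtain ⟨r, hr0, hrle, hrq⟩ := Q_sep hd hσ
  obtain ⟨r', hr'0, hr'le, hr'q⟩ := Q_sep hd hmix
  have hQmix : Qf ι (((1 + t : ℝ) : ℂ)⁻¹ •
      (vecMulVec (ψme ι) (star (ψme ι)) + (t : ℂ) • σ))
      = ((1 + t : ℝ) : ℂ)⁻¹ * (1 + (t : ℂ) * (r : ℝ)) := by
    rw [Qf_smul, Qf_add, Qf_smul, Qf_Pme hd, hrq]
  rw [hr'q] at hQmix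
  have ht1 : (0:ℝ) < 1 + t := by linarith
  have hreal : r' = (1 + t)⁻¹ * (1 + t * r) := by
    have := hQmix
    have h2 : ((r' : ℝ) : ℂ) = (((1 + t)⁻¹ * (1 + t * r) : ℝ) : ℂ) := by
      rw [this]; push_cast; ring
    exact_mod_cast h2
  have hcard0 : (0:ℝ) < (Fintype.card ι : ℝ) := by linarith
  have key : (1 + t)⁻¹ * (1 + t * r) ≤ (Fintype.card ι : ℝ)⁻¹ := hreal ▸ hr'le
  have h1 : 1 ≤ 1 + t * r := by nlinarith
  have h4 : (1 + t)⁻¹ ≤ (Fintype.card ι : ℝ)⁻¹ := by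
    calc (1 + t)⁻¹ = (1 + t)⁻¹ * 1 := by ring
      _ ≤ (1 + t)⁻¹ * (1 + t * r) := by
          have := (inv_pos.mpr ht1).le
          nlinarith
      _ ≤ (Fintype.card ι : ℝ)⁻¹ := key
  have h5 := mul_le_mul_of_nonneg_left h4 (le_of_lt (mul_pos hcard0 ht1))
  have e1 : (Fintype.card ι : ℝ) * (1 + t) * (1 + t)⁻¹ = (Fintype.card ι : ℝ) := by
    field_simp
  have e2 : (Fintype.card ι : ℝ) * (1 + t) * (Fintype.card ι : ℝ)⁻¹ = 1 + t := by
    field_simp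
  rw [e1, e2] at h5
  linarith

variable (ι)

def SIGw : ι × ι → ℝ := fun z =>
  if z.1 = z.2 then 0 else ((Fintype.card ι : ℝ) * (Fintype.card ι : ℝ) - Fintype.card ι)⁻¹

def SIG : Matrix (ι × ι) (ι × ι) ℂ :=
  ∑ z : ι × ι, ((SIGw ι z : ℝ) : ℂ) • (outer (bvec ι z.1) ⊗ₖ outer (bvec ι z.2))

variable {ι}

lemma card_fact (hd2 : 2 ≤ Fintype.card ι) :
    (0:ℝ) < (Fintype.card ι : ℝ) * (Fintype.card ι : ℝ) - Fintype.card ι := by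
  have hcR : (2:ℝ) ≤ (Fintype.card ι : ℝ) := by exact_mod_cast hd2
  nlinarith

lemma SIG_sep (hd2 : 2 ≤ Fintype.card ι) : SeparableState (SIG ι) := by
  have hpos := card_fact (ι := ι) hd2
  refine separable_of_sum (SIGw ι) (fun z => bvec ι z.1) (fun z => bvec ι z.2)
    (fun z => ?_) ?_ (fun z => bvec_unit z.1) (fun z => bvec_unit z.2) rfl
  · unfold SIGw
    split_ifs
    · exact le_refl 0
    · positivity
  · unfold SIGw
    rw [Fintype.sum_prod_type]
    have hrow : ∀ a : ι, (∑ b : ι, if a = b then (0:ℝ) else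
        ((Fintype.card ι : ℝ) * (Fintype.card ι : ℝ) - Fintype.card ι)⁻¹)
        = (Fintype.card ι : ℝ) * ((Fintype.card ι : ℝ) * (Fintype.card ι : ℝ) - Fintype.card ι)⁻¹
          - ((Fintype.card ι : ℝ) * (Fintype.card ι : ℝ) - Fintype.card ι)⁻¹ := by
      intro a
      have : ∀ b : ι, (if a = b then (0:ℝ) else
          ((Fintype.card ι : ℝ) * (Fintype.card ι : ℝ) - Fintype.card ι)⁻¹)
          = ((Fintype.card ι : ℝ) * (Fintype.card ι : ℝ) - Fintype.card ι)⁻¹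
            - (if a = b then ((Fintype.card ι : ℝ) * (Fintype.card ι : ℝ) - Fintype.card ι)⁻¹
              else 0) := by
        intro b; split_ifs <;> ring
      rw [Finset.sum_congr rfl fun b _ => this b, Finset.sum_sub_distrib,
        Finset.sum_ite_eq, Finset.sum_const, Finset.card_univ, nsmul_eq_mul]
      simp
    rw [Finset.sum_congr rfl fun a _ => hrow a, Finset.sum_sub_distrib]
    rw [Finset.sum_const, Finset.sum_const, Finset.card_univ, nsmul_eq_mul, nsmul_eq_mul]
    field_simp
    apply div_self
    intro h
    have hcR : (2:ℝ) ≤ (Fintype.card ι : ℝ) := by exact_mod_cast hd2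
    linarith

lemma SIG_val (hd2 : 2 ≤ Fintype.card ι) :
    SIG ι = ((((Fintype.card ι : ℝ) * (Fintype.card ι : ℝ) - Fintype.card ι : ℝ)) : ℂ)⁻¹ •
      (1 - D0 ι) := by
  unfold SIG
  rw [Fintype.sum_prod_type]
  have hz : ∀ a b : ι, ((SIGw ι (a, b) : ℝ) : ℂ) • (outer (bvec ι a) ⊗ₖ outer (bvec ι b))
      = ((((Fintype.card ι : ℝ) * (Fintype.card ι : ℝ) - Fintype.card ι : ℝ)) : ℂ)⁻¹ •
        ((if a = b then (0:ℂ) else 1) • (outer (bvec ι a) ⊗ₖ outer (bvec ι b))) := by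
    intro a b
    unfold SIGw
    by_cases hab : a = b
    · simp [hab]
    · rw [if_neg hab, if_neg hab, one_smul, Complex.ofReal_inv]
  rw [Finset.sum_congr rfl fun a _ => Finset.sum_congr rfl fun b _ => hz a b]
  rw [Finset.sum_congr rfl fun a (_ : a ∈ Finset.univ) => (Finset.smul_sum).symm,
    ← Finset.smul_sum, offdiag_id]


lemma mix_val (hd2 : 2 ≤ Fintype.card ι) :
    ((1 + ((Fintype.card ι : ℝ) - 1) : ℝ) : ℂ)⁻¹ •
      (vecMulVec (ψme ι) (star (ψme ι)) + (((Fintype.card ι : ℝ) - 1 : ℝ) : ℂ) • SIG ι)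
    = ∑ ω : ι → ZMod 3, ((((3:ℝ) ^ Fintype.card ι)⁻¹ : ℝ) : ℂ) •
        (outer (uvec ι ω) ⊗ₖ outer (vvec ι ω)) := by
  have hd : 0 < Fintype.card ι := by omega
  have hcne : (Fintype.card ι : ℂ) ≠ 0 := Nat.cast_ne_zero.mpr hd.ne'
  have h3ne : ((3:ℂ) ^ Fintype.card ι) ≠ 0 := pow_ne_zero _ (by norm_num)
  have hc1 : (Fintype.card ι : ℂ) - 1 ≠ 0 := by
    have h : (Fintype.card ι : ℂ) ≠ 1 := by
      exact_mod_cast (by omega : Fintype.card ι ≠ 1)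
    exact sub_ne_zero.mpr h
  have hcc : (Fintype.card ι : ℂ) * (Fintype.card ι : ℂ) - (Fintype.card ι : ℂ) ≠ 0 := by
    have h := mul_ne_zero hcne hc1
    intro h0
    exact h (by linear_combination h0)
  rw [Pme_eq hd, SIG_val hd2]
  have hsum : ∑ ω : ι → ZMod 3, ((((3:ℝ) ^ Fintype.card ι)⁻¹ : ℝ) : ℂ) •
      (outer (uvec ι ω) ⊗ₖ outer (vvec ι ω))
      = ((((3:ℝ) ^ Fintype.card ι : ℝ) : ℂ))⁻¹ •
        ((((3:ℂ) ^ Fintype.card ι) * (Fintype.card ι : ℂ)⁻¹ * (Fintype.card ι : ℂ)⁻¹) •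
          (1 + (Fintype.card ι : ℂ) • P0 ι - D0 ι)) := by
    rw [← E1 hd, Finset.smul_sum]
    exact Finset.sum_congr rfl fun ω _ => by rw [Complex.ofReal_inv]
  rw [hsum]
  ext p q
  simp only [Matrix.smul_apply, Matrix.add_apply, Matrix.sub_apply, Matrix.one_apply,
    smul_eq_mul]
  push_cast
  field_simp
  have hinv : (Fintype.card ι : ℂ) * (Fintype.card ι : ℂ)⁻¹ = 1 := mul_inv_cancel₀ hcne
  linear_combination ((if p = q then (1:ℂ) else 0) - D0 ι p q + (Fintype.card ι : ℂ) * P0 ι p q) * hinv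

lemma mem_S (hd2 : 2 ≤ Fintype.card ι) : ((Fintype.card ι : ℝ) - 1) ∈ RS (ι := ι) := by
  have hd : 0 < Fintype.card ι := by omega
  have hcR : (2:ℝ) ≤ (Fintype.card ι : ℝ) := by exact_mod_cast hd2
  refine ⟨by linarith, SIG ι, SIG_sep hd2, ?_⟩
  have hcard3 : Fintype.card (ι → ZMod 3) = 3 ^ Fintype.card ι := by
    simp [Fintype.card_fun]
  refine separable_of_sum (fun _ => ((3:ℝ) ^ Fintype.card ι)⁻¹) (uvec ι) (vvec ι)
    (fun _ => by positivity) ?_ (fun ω => uvec_unit hd ω) (fun ω => vvec_unit hd ω)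
    (mix_val hd2)
  rw [Finset.sum_const, Finset.card_univ, hcard3, nsmul_eq_mul]
  have h3 : ((3:ℝ) ^ Fintype.card ι) ≠ 0 := by positivity
  push_cast
  field_simp

lemma rob_me (hd2 : 2 ≤ Fintype.card ι) :
    robustness (vecMulVec (ψme ι) (star (ψme ι))) = (Fintype.card ι : ℝ) - 1 := by
  have h : robustness (vecMulVec (ψme ι) (star (ψme ι))) = sInf (RS (ι := ι)) := rfl
  rw [h]
  exact IsLeast.csInf_eq ⟨mem_S hd2, fun t ht => mem_lb hd2 ht⟩

end RobAux

lemma two_pow_le_three_pow {n : ℕ} (hn : 2 ≤ n) : 2 ^ (n + 1) ≤ 3 ^ n := by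
  induction n, hn using Nat.le_induction with
  | base => norm_num
  | succ m hm ih =>
    calc 2 ^ (m + 1 + 1) = 2 * 2 ^ (m + 1) := by ring
      _ ≤ 2 * 3 ^ m := Nat.mul_le_mul_left 2 ih
      _ ≤ 3 * 3 ^ m := Nat.mul_le_mul_right _ (by norm_num)
      _ = 3 ^ (m + 1) := by ring


theorem robustness_bell_tensor_power (n : ℕ) (hn : 2 ≤ n) :
    let ψn : (Fin n → Fin 2) × (Fin n → Fin 2) → ℂ :=
      fun p => if p.1 = p.2 then (((Real.sqrt (2 ^ n))⁻¹ : ℝ) : ℂ) else 0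
    let ψ1 : Fin 2 × Fin 2 → ℂ :=
      fun p => if p.1 = p.2 then (((Real.sqrt 2)⁻¹ : ℝ) : ℂ) else 0
    (1 + 2 * robustness (vecMulVec ψn (star ψn)) = 2 ^ (n + 1) - 1) ∧
    ((2 : ℝ) ^ (n + 1) - 1 < 3 ^ n) ∧
    ((3 : ℝ) ^ n = (1 + 2 * robustness (vecMulVec ψ1 (star ψ1))) ^ n) := by
  intro ψn ψ1
  have hc2 : Fintype.card (Fin n → Fin 2) = 2 ^ n := by simp [Fintype.card_fun]
  have hψn : ψn = RobAux.ψme (Fin n → Fin 2) := by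
    funext p
    show (if p.1 = p.2 then _ else 0) = (if p.1 = p.2 then RobAux.cc _ else 0)
    congr 1
    unfold RobAux.cc
    rw [hc2, Complex.ofReal_inv]
    congr 2
    push_cast
    ring
  have hψ1 : ψ1 = RobAux.ψme (Fin 2) := by
    funext p
    show (if p.1 = p.2 then _ else 0) = (if p.1 = p.2 then RobAux.cc _ else 0)
    congr 1
    unfold RobAux.cc
    rw [Complex.ofReal_inv]
    congr 2
  have hcard_le : 2 ≤ Fintype.card (Fin n → Fin 2) := by
    rw [hc2]
    calc 2 = 2 ^ 1 := by norm_num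
      _ ≤ 2 ^ n := Nat.pow_le_pow_right (by norm_num) (by omega)
  have hr1 : robustness (vecMulVec ψn (star ψn)) = ((2:ℝ)) ^ n - 1 := by
    rw [hψn, RobAux.rob_me hcard_le, hc2]
    push_cast
    ring
  have hr2 : robustness (vecMulVec ψ1 (star ψ1)) = 1 := by
    rw [hψ1, RobAux.rob_me (by simp)]
    norm_num
  refine ⟨?_, ?_, ?_⟩
  · rw [hr1, pow_succ]
    ring
  · have hnat : 2 ^ (n + 1) ≤ 3 ^ n := two_pow_le_three_pow hn
    have hr : ((2:ℝ)) ^ (n + 1) ≤ ((3:ℝ)) ^ n := by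
      have := hnat
      exact_mod_cast (by exact_mod_cast Nat.cast_le.mpr this : ((2 ^ (n+1) : ℕ) : ℝ) ≤ ((3 ^ n : ℕ) : ℝ))
    linarith
  · rw [hr2]
    norm_num
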